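/- The network polynomial of a complete and decomposable SPN is a multilinear function of the edge weights w with nonnegative (positive) coefficients on each monomial: each edge weight appears at most once in each monomial of the induced-tree expansion. -/

import Mathlib

open scoped Classical

/-- The kind of a node in a sum-product network. -/
inductive NodeKind | sum | prod | leaf
deriving DecidableEq

/-- A sum-product network (SPN) over variables `X_1, …, X_n`: a rooted DAG with `N` nodes
(indexed so that edges go from larger to smaller indices), where each node is a sum node,
a product node, or a leaf labelled with a variable, and sum edges carry weights. -/
structure SPN (N n : ℕ) where
  kind : Fin N → NodeKind
  children : Fin N → Finset (Fin N)
  var : Fin N → Fin n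
  root : Fin N
  child_lt : ∀ k, ∀ j ∈ children k, j < k
  leaf_iff : ∀ k, kind k = NodeKind.leaf ↔ children k = ∅

namespace SPN

variable {N n : ℕ}

/-- Recursive evaluation of an SPN: leaves return their given values, product nodes multiply
their children's values, sum nodes take weighted sums of their children's values. -/
noncomputable def value (S : SPN N n) (leaf : Fin N → ℝ) (w : Fin N → Fin N → ℝ) :
    Fin N → ℝ
  | k =>
    match S.kind k with
    | NodeKind.leaf => leaf k
    | NodeKind.prod => ∏ j ∈ (S.children k).attach, value S leaf w j.1
    | NodeKind.sum => ∑ j ∈ (S.children k).attach, w k j.1 * value S leaf w j.1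
  termination_by k => (k : ℕ)
  decreasing_by all_goals exact S.child_lt _ _ j.2

/-- Evaluation where the value of the node `k₀` is overridden by the free value `t`
(used to differentiate the root value with respect to the value of node `k₀`). -/
noncomputable def valueAt (S : SPN N n) (leaf : Fin N → ℝ) (w : Fin N → Fin N → ℝ)
    (k₀ : Fin N) (t : ℝ) : Fin N → ℝ
  | k =>
    if k = k₀ then t else
      match S.kind k with
      | NodeKind.leaf => leaf k
      | NodeKind.prod => ∏ j ∈ (S.children k).attach, valueAt S leaf w k₀ t j.1
      | NodeKind.sum => ∑ j ∈ (S.children k).attach, w k j.1 * valueAt S leaf w k₀ t j.1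
  termination_by k => (k : ℕ)
  decreasing_by all_goals exact S.child_lt _ _ j.2

/-- The scope of a node: the set of variables appearing below it. -/
noncomputable def scope (S : SPN N n) : Fin N → Finset (Fin n)
  | k =>
    match S.kind k with
    | NodeKind.leaf => {S.var k}
    | _ => (S.children k).attach.biUnion (fun j => scope S j.1)
  termination_by k => (k : ℕ)
  decreasing_by all_goals exact S.child_lt _ _ j.2

/-- An SPN is complete if all children of a sum node have the same scope. -/
def Complete (S : SPN N n) : Prop :=
  ∀ k, S.kind k = NodeKind.sum →
    ∀ j₁ ∈ S.children k, ∀ j₂ ∈ S.children k, S.scope j₁ = S.scope j₂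

/-- An SPN is decomposable if distinct children of a product node have disjoint scopes. -/
def Decomposable (S : SPN N n) : Prop :=
  ∀ k, S.kind k = NodeKind.prod →
    ∀ j₁ ∈ S.children k, ∀ j₂ ∈ S.children k, j₁ ≠ j₂ →
      Disjoint (S.scope j₁) (S.scope j₂)

/-- `(TV, TE)` is an induced tree of the SPN `S`: it contains the root; its edges are edges of
`S` between its nodes; every sum node in it has exactly one outgoing edge in it; every product
node in it keeps all its outgoing edges; and every non-root node in it is the endpoint of one
of its edges. -/
def IsInducedTree (S : SPN N n) (TV : Finset (Fin N)) (TE : Finset (Fin N × Fin N)) : Prop :=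
  S.root ∈ TV ∧
  (∀ e ∈ TE, e.1 ∈ TV ∧ e.2 ∈ TV ∧ e.2 ∈ S.children e.1) ∧
  (∀ k ∈ TV, S.kind k = NodeKind.sum → ∃! j, j ∈ S.children k ∧ (k, j) ∈ TE) ∧
  (∀ k ∈ TV, S.kind k = NodeKind.prod → ∀ j ∈ S.children k, (k, j) ∈ TE) ∧
  (∀ k ∈ TV, k ≠ S.root → ∃ e ∈ TE, e.2 = k)

noncomputable def reach (S : SPN N n) (k : Fin N) : Fin N → Prop
  | m => m = k ∨ ∃ x ∈ (S.children m).attach, reach S k x.1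
  termination_by m => (m : ℕ)
  decreasing_by all_goals exact S.child_lt _ _ x.2

lemma reach_self (S : SPN N n) (k : Fin N) : S.reach k k := by
  rw [reach]; exact Or.inl rfl

lemma reach_step (S : SPN N n) {k x m : Fin N} (hx : x ∈ S.children m)
    (h : S.reach k x) : S.reach k m := by
  rw [reach]; exact Or.inr ⟨⟨x, hx⟩, Finset.mem_attach _ _, h⟩

lemma fin_strong_induction {P : Fin N → Prop}
    (H : ∀ m, (∀ x, x < m → P x) → P m) : ∀ m, P m := fun m =>
  WellFoundedLT.induction m H

lemma reach_le (S : SPN N n) {k : Fin N} : ∀ m, S.reach k m → k ≤ m := by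
  refine fin_strong_induction (P := fun m => S.reach k m → k ≤ m) (fun m IH h => ?_)
  rw [reach] at h
  rcases h with rfl | ⟨x, -, hx⟩
  · exact le_refl _
  · exact le_of_lt (lt_of_le_of_lt (IH x.1 (S.child_lt _ _ x.2) hx) (S.child_lt _ _ x.2))

lemma value_leaf_eq (S : SPN N n) (leaf : Fin N → ℝ) (w : Fin N → Fin N → ℝ) {m : Fin N}
    (h : S.kind m = NodeKind.leaf) : S.value leaf w m = leaf m := by
  rw [value, h]

lemma value_sum_eq (S : SPN N n) (leaf : Fin N → ℝ) (w : Fin N → Fin N → ℝ) {m : Fin N}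
    (h : S.kind m = NodeKind.sum) :
    S.value leaf w m = ∑ x ∈ S.children m, w m x * S.value leaf w x := by
  rw [value, h, ← Finset.sum_attach (S.children m) (fun x => w m x * S.value leaf w x)]

lemma value_prod_eq (S : SPN N n) (leaf : Fin N → ℝ) (w : Fin N → Fin N → ℝ) {m : Fin N}
    (h : S.kind m = NodeKind.prod) :
    S.value leaf w m = ∏ x ∈ S.children m, S.value leaf w x := by
  rw [value, h, ← Finset.prod_attach (S.children m) (fun x => S.value leaf w x)]


lemma scope_eq_biUnion (S : SPN N n) {m : Fin N} (h : S.kind m ≠ NodeKind.leaf) :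
    S.scope m = (S.children m).attach.biUnion (fun j => S.scope j.1) := by
  rcases hk : S.kind m with _ | _ | _
  · rw [scope, hk]
  · rw [scope, hk]
  · exact absurd hk h

lemma scope_child_subset (S : SPN N n) {x m : Fin N} (hx : x ∈ S.children m) :
    S.scope x ⊆ S.scope m := by
  have hm : S.kind m ≠ NodeKind.leaf := by
    intro h
    rw [S.leaf_iff] at h
    rw [h] at hx
    exact absurd hx (Finset.notMem_empty x)
  rw [S.scope_eq_biUnion hm]
  exact Finset.subset_biUnion_of_mem (fun j => S.scope j.1)
    (Finset.mem_attach _ (⟨x, hx⟩ : {y // y ∈ S.children m}))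

lemma scope_nonempty (S : SPN N n) : ∀ m, (S.scope m).Nonempty := by
  refine fin_strong_induction (P := fun m => (S.scope m).Nonempty) (fun m IH => ?_)
  show (S.scope m).Nonempty
  by_cases hk : S.kind m = NodeKind.leaf
  · rw [scope, hk]
    exact ⟨S.var m, Finset.mem_singleton_self _⟩
  · have hne : S.children m ≠ ∅ := fun h => hk ((S.leaf_iff m).mpr h)
    obtain ⟨x, hx⟩ := Finset.nonempty_iff_ne_empty.mpr hne
    exact (IH x (S.child_lt _ _ hx)).mono (S.scope_child_subset hx)

lemma reach_scope (S : SPN N n) {k : Fin N} :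
    ∀ m, S.reach k m → S.scope k ⊆ S.scope m := by
  refine fin_strong_induction (P := fun m => S.reach k m → S.scope k ⊆ S.scope m)
    (fun m IH h => ?_)
  rw [reach] at h
  rcases h with rfl | ⟨x, -, hx⟩
  · exact subset_rfl
  · exact (IH x.1 (S.child_lt _ _ x.2) hx).trans (S.scope_child_subset x.2)

theorem affine_aux (S : SPN N n) (hD : S.Decomposable)
    (leaf : Fin N → ℝ) (hleaf : ∀ k, 0 < leaf k)
    (w : Fin N → Fin N → ℝ) (hw : ∀ k j, 0 < w k j) (k j : Fin N) :
    ∀ m : Fin N, ∃ a b : ℝ, 0 ≤ a ∧ 0 ≤ b ∧ (a ≠ 0 → S.reach k m) ∧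
      ∀ t : ℝ, S.value leaf (fun k' j' => if k' = k ∧ j' = j then t else w k' j') m
        = a * t + b := by
  set W : ℝ → Fin N → Fin N → ℝ :=
    fun t k' j' => if k' = k ∧ j' = j then t else w k' j' with hW
  refine fin_strong_induction
    (P := fun m => ∃ a b : ℝ, 0 ≤ a ∧ 0 ≤ b ∧ (a ≠ 0 → S.reach k m) ∧
      ∀ t : ℝ, S.value leaf (W t) m = a * t + b) (fun m IH => ?_)
  have IH' : ∀ x : Fin N, ∃ a b : ℝ, x < m →
      0 ≤ a ∧ 0 ≤ b ∧ (a ≠ 0 → S.reach k x) ∧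
      ∀ t : ℝ, S.value leaf (W t) x = a * t + b := by
    intro x
    by_cases h : x < m
    · obtain ⟨a, b, h1, h2, h3, h4⟩ := IH x h
      exact ⟨a, b, fun _ => ⟨h1, h2, h3, h4⟩⟩
    · exact ⟨0, 0, fun h' => absurd h' h⟩
  choose a b hab using IH'
  rcases hk : S.kind m with _ | _ | _
  · -- sum node
    by_cases hmj : m = k ∧ j ∈ S.children m
    · obtain ⟨rfl, hj⟩ := hmj
      have haz : ∀ x ∈ S.children m, a x = 0 := by
        intro x hx
        by_contra hne
        exact absurd (S.reach_le x ((hab x (S.child_lt _ _ hx)).2.2.1 hne))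
          (not_le.mpr (S.child_lt _ _ hx))
      refine ⟨b j, ∑ x ∈ S.children m \ {j}, w m x * b x,
        (hab j (S.child_lt _ _ hj)).2.1,
        Finset.sum_nonneg (fun x hx => mul_nonneg (le_of_lt (hw m x))
          ((hab x (S.child_lt _ _ (Finset.mem_sdiff.mp hx).1)).2.1)),
        fun _ => S.reach_self m, fun t => ?_⟩
      rw [S.value_sum_eq leaf (W t) hk]
      rw [Finset.sum_congr rfl (fun x hx => show W t m x * S.value leaf (W t) x
          = (if x = j then t else w m x) * b x by
        rw [(hab x (S.child_lt _ _ hx)).2.2.2 t, haz x hx, zero_mul, zero_add]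
        simp only [hW, true_and])]
      rw [Finset.sum_eq_sum_sdiff_singleton_add hj]
      rw [Finset.sum_congr rfl (fun x hx => show (if x = j then t else w m x) * b x
          = w m x * b x by
        rw [if_neg (by simpa using (Finset.mem_sdiff.mp hx).2)])]
      rw [if_pos rfl]
      ring
    · have hWx : ∀ (t : ℝ), ∀ x ∈ S.children m, W t m x = w m x := by
        intro t x hx
        simp only [hW]
        rw [if_neg]
        rintro ⟨rfl, rfl⟩
        exact hmj ⟨rfl, hx⟩
      refine ⟨∑ x ∈ S.children m, w m x * a x, ∑ x ∈ S.children m, w m x * b x,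
        Finset.sum_nonneg (fun x hx => mul_nonneg (le_of_lt (hw m x))
          ((hab x (S.child_lt _ _ hx)).1)),
        Finset.sum_nonneg (fun x hx => mul_nonneg (le_of_lt (hw m x))
          ((hab x (S.child_lt _ _ hx)).2.1)),
        fun hne => ?_, fun t => ?_⟩
      · obtain ⟨x, hx, hxa⟩ := Finset.exists_ne_zero_of_sum_ne_zero hne
        refine S.reach_step hx ((hab x (S.child_lt _ _ hx)).2.2.1 (fun h0 => hxa ?_))
        rw [h0, mul_zero]
      · rw [S.value_sum_eq leaf (W t) hk]
        rw [Finset.sum_congr rfl (fun x hx => show W t m x * S.value leaf (W t) x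
            = w m x * a x * t + w m x * b x by
          rw [hWx t x hx, (hab x (S.child_lt _ _ hx)).2.2.2 t]
          ring)]
        rw [Finset.sum_add_distrib, Finset.sum_mul]
  · -- product node
    by_cases hall : ∀ x ∈ S.children m, a x = 0
    · refine ⟨0, ∏ x ∈ S.children m, b x, le_refl 0,
        Finset.prod_nonneg (fun x hx => (hab x (S.child_lt _ _ hx)).2.1),
        fun h => absurd rfl h, fun t => ?_⟩
      rw [S.value_prod_eq leaf (W t) hk, zero_mul, zero_add]
      exact Finset.prod_congr rfl (fun x hx => by
        rw [(hab x (S.child_lt _ _ hx)).2.2.2 t, hall x hx, zero_mul, zero_add])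
    · push_neg at hall
      obtain ⟨x₀, hx₀, ha₀⟩ := hall
      have huniq : ∀ x ∈ S.children m, x ≠ x₀ → a x = 0 := by
        intro x hx hne
        by_contra hax
        have r1 := (hab x (S.child_lt _ _ hx)).2.2.1 hax
        have r2 := (hab x₀ (S.child_lt _ _ hx₀)).2.2.1 ha₀
        obtain ⟨v, hv⟩ := S.scope_nonempty k
        exact (Finset.disjoint_left.mp (hD m hk x hx x₀ hx₀ hne)
          (S.reach_scope x r1 hv)) (S.reach_scope x₀ r2 hv)
      have hC0 : 0 ≤ ∏ x ∈ S.children m \ {x₀}, b x :=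
        Finset.prod_nonneg (fun x hx =>
          (hab x (S.child_lt _ _ (Finset.mem_sdiff.mp hx).1)).2.1)
      refine ⟨a x₀ * ∏ x ∈ S.children m \ {x₀}, b x,
        b x₀ * ∏ x ∈ S.children m \ {x₀}, b x,
        mul_nonneg (hab x₀ (S.child_lt _ _ hx₀)).1 hC0,
        mul_nonneg (hab x₀ (S.child_lt _ _ hx₀)).2.1 hC0,
        fun hne => S.reach_step hx₀ ((hab x₀ (S.child_lt _ _ hx₀)).2.2.1
          (fun h0 => hne (by rw [h0, zero_mul]))), fun t => ?_⟩
      rw [S.value_prod_eq leaf (W t) hk, Finset.prod_eq_prod_diff_singleton_mul hx₀]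
      rw [Finset.prod_congr rfl (fun x hx => show S.value leaf (W t) x = b x by
        rw [(hab x (S.child_lt _ _ (Finset.mem_sdiff.mp hx).1)).2.2.2 t,
          huniq x (Finset.mem_sdiff.mp hx).1
            (by simpa using (Finset.mem_sdiff.mp hx).2), zero_mul, zero_add])]
      rw [(hab x₀ (S.child_lt _ _ hx₀)).2.2.2 t]
      ring
  · -- leaf node
    exact ⟨0, leaf m, le_refl 0, (hleaf m).le, fun h => absurd rfl h, fun t => by
      rw [S.value_leaf_eq leaf (W t) hk, zero_mul, zero_add]⟩

end SPN

/-- The network polynomial of a complete and decomposable SPN is multilinear in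
the edge weights with nonnegative coefficients: as a function of any single edge weight
`w_{k,j}` (all other weights and the leaf values being positive), the root value is affine,
`a·t + b`, with nonnegative coefficients `a, b`. -/
theorem SPN.value_affine_in_each_weight {N n : ℕ} (S : SPN N n)
    (hC : S.Complete) (hD : S.Decomposable)
    (leaf : Fin N → ℝ) (hleaf : ∀ k, 0 < leaf k)
    (w : Fin N → Fin N → ℝ) (hw : ∀ k j, 0 < w k j)
    (k j : Fin N) :
    ∃ a b : ℝ, 0 ≤ a ∧ 0 ≤ b ∧ ∀ t : ℝ,
      S.value leaf (fun k' j' => if k' = k ∧ j' = j then t else w k' j') S.root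
        = a * t + b := by
  obtain ⟨a, b, ha, hb, -, hval⟩ := S.affine_aux hD leaf hleaf w hw k j S.root
  exact ⟨a, b, ha, hb, hval⟩
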